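/- For all t > 0 and x ∈ ℝ, the identity ∫₀ᵗ (√(t−s)/(π s^{3/2})) |x| e^{−x²/(2s)} ds = ∫₀ᵗ (1/√(2π s)) e^{−x²/(2s)} ds holds. -/

import Mathlib

open MeasureTheory Real Set
open scoped ENNReal

noncomputable def Cker (a s r : ℝ) : ℝ :=
  a * Real.exp (-a^2/(2*s)) / (2*Real.pi * s ^ ((3:ℝ)/2) * Real.sqrt (r - s))

private lemma inner_eq {a s t : ℝ} (ha : 0 < a) (hs : 0 < s) (hst : s < t) :
    ∫⁻ r in Set.Ioo s t, ENNReal.ofReal (Cker a s r)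
      = ENNReal.ofReal (Real.sqrt (t - s) / (Real.pi * s ^ ((3:ℝ)/2)) * a
          * Real.exp (-a^2/(2*s))) := by
  have hs32 : (0:ℝ) < s ^ ((3:ℝ)/2) := Real.rpow_pos_of_pos hs _
  set c : ℝ := a * Real.exp (-a^2/(2*s)) / (2*Real.pi * s ^ ((3:ℝ)/2)) with hc
  have hc0 : 0 ≤ c := by positivity
  have hint : IntervalIntegrable (fun r => c * (r - s) ^ (-(1:ℝ)/2)) volume s t := by
    have h0 : IntervalIntegrable (fun y : ℝ => y ^ (-(1:ℝ)/2)) volume (s - s) (t - s) := by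
      apply intervalIntegral.intervalIntegrable_rpow'
      norm_num
    simpa using (h0.comp_sub_right s).const_mul c
  have hcong : ∀ r ∈ Set.Ioo s t, Cker a s r = c * (r - s) ^ (-(1:ℝ)/2) := by
    intro r hr
    have h1 : (0:ℝ) < r - s := by linarith [hr.1]
    have hsq : Real.sqrt (r - s) ≠ 0 := by positivity
    rw [show (-(1:ℝ)/2) = -(1/2:ℝ) by norm_num, Real.rpow_neg h1.le, ← Real.sqrt_eq_rpow]
    rw [hc]
    unfold Cker
    field_simp
  have hIcong : IntegrableOn (fun r => Cker a s r) (Set.Ioo s t) := by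
    apply (((intervalIntegrable_iff_integrableOn_Ioo_of_le hst.le).mp hint)).congr_fun ?_ measurableSet_Ioo
    intro r hr; exact (hcong r hr).symm
  have hnn : 0 ≤ᵐ[volume.restrict (Set.Ioo s t)] fun r => Cker a s r := by
    filter_upwards with r
    unfold Cker
    positivity
  rw [← ofReal_integral_eq_lintegral_ofReal hIcong hnn]
  congr 1
  rw [setIntegral_congr_fun measurableSet_Ioo hcong]
  rw [← MeasureTheory.integral_Ioc_eq_integral_Ioo, ← intervalIntegral.integral_of_le hst.le]
  rw [intervalIntegral.integral_const_mul]
  have := intervalIntegral.integral_comp_sub_right (a := s) (b := t) (fun y : ℝ => y ^ (-(1:ℝ)/2)) s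
  rw [this, sub_self]
  rw [integral_rpow (Or.inl (by norm_num))]
  have h2 : (-(1:ℝ)/2 + 1) = 1/2 := by norm_num
  rw [h2, Real.zero_rpow (by norm_num), ← Real.sqrt_eq_rpow]
  have hπ := Real.pi_ne_zero
  field_simp [hc]
  rw [hc]; field_simp; ring

private lemma rpow_three_halves {s : ℝ} (hs : 0 < s) :
    s ^ ((3:ℝ)/2) = s * Real.sqrt s := by
  rw [Real.sqrt_eq_rpow, show (3:ℝ)/2 = 1 + 1/2 by norm_num, Real.rpow_add hs, Real.rpow_one]

private lemma lintegral_image_deriv {s : Set ℝ} {f : ℝ → ℝ} {f' : ℝ → ℝ}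
    (hs : MeasurableSet s) (hf' : ∀ x ∈ s, HasDerivWithinAt f (f' x) s x)
    (hf : Set.InjOn f s) (g : ℝ → ENNReal) :
    ∫⁻ x in f '' s, g x = ∫⁻ x in s, ENNReal.ofReal |f' x| * g (f x) := by
  simpa only [ContinuousLinearMap.det_toSpanSingleton] using
    MeasureTheory.lintegral_image_eq_lintegral_abs_det_fderiv_mul volume hs
      (fun x hx => (hf' x hx).hasFDerivWithinAt) hf g

private lemma point_eq' {a p u d : ℝ} (ha : 0 < a) (hp : 0 < p) (hu : 0 < u) (hd : 0 < d)
    (hrel : d^2 = a^2 + p^2*u^2) :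
    2*a^2*(p^2)^2*u/(d^2)^2 * Cker a (a^2*(p^2)/(d^2)) (p^2)
      = Real.exp (-a^2/(2*p^2))/(Real.pi*p) * Real.exp (-(1/2)*u^2) := by
  unfold Cker
  have hφ : (0:ℝ) < a^2*p^2/d^2 := by positivity
  have hexp : -a^2/(2*(a^2*p^2/d^2)) = -a^2/(2*p^2) + -(1/2)*u^2 := by
    field_simp
    linear_combination (-1) * hrel
  have hsub : p^2 - a^2*p^2/d^2 = (p^2*u/d)^2 := by
    field_simp
    linear_combination hrel
  have hsq1 : Real.sqrt (p^2 - a^2*p^2/d^2) = p^2*u/d := by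
    rw [hsub, Real.sqrt_sq (by positivity)]
  have hsq2 : Real.sqrt (a^2*p^2/d^2) = a*p/d := by
    rw [show a^2*p^2/d^2 = (a*p/d)^2 by ring, Real.sqrt_sq (by positivity)]
  have hs32 : (a^2*p^2/d^2) ^ ((3:ℝ)/2) = (a^2*p^2/d^2) * (a*p/d) := by
    rw [rpow_three_halves hφ, hsq2]
  rw [hexp, Real.exp_add, hsq1, hs32]
  have hπ := Real.pi_ne_zero
  field_simp

private lemma kernel_eq {a r : ℝ} (ha : 0 < a) (hr : 0 < r) :
    ∫⁻ s in Set.Ioo (0:ℝ) r, ENNReal.ofReal (Cker a s r)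
      = ENNReal.ofReal ((1 / Real.sqrt (2*Real.pi*r)) * Real.exp (-a^2/(2*r))) := by
  set φ : ℝ → ℝ := fun u => a^2*r/(a^2+r*u^2) with hφ
  set φ' : ℝ → ℝ := fun u => -(2*a^2*r^2*u)/(a^2+r*u^2)^2 with hφ'
  have hD : ∀ u : ℝ, (0:ℝ) < a^2+r*u^2 := fun u => by positivity
  have himg : φ '' Set.Ioi 0 = Set.Ioo 0 r := by
    ext y
    simp only [Set.mem_image, Set.mem_Ioi, Set.mem_Ioo, hφ]
    constructor
    · rintro ⟨u, hu, rfl⟩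
      refine ⟨div_pos (by positivity) (hD u), ?_⟩
      rw [div_lt_iff₀ (hD u)]
      nlinarith [mul_pos (mul_pos hr hr) (mul_pos hu hu)]
    · rintro ⟨hy0, hyr⟩
      have hnum : (0:ℝ) < a^2*r - a^2*y := by nlinarith [mul_pos (pow_pos ha 2) (sub_pos.2 hyr)]
      have hnn : (0:ℝ) < (a^2*r - a^2*y)/(r*y) := div_pos hnum (by positivity)
      refine ⟨Real.sqrt ((a^2*r - a^2*y)/(r*y)), Real.sqrt_pos.2 hnn, ?_⟩
      rw [Real.sq_sqrt hnn.le]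
      have hden : a^2 + r*((a^2*r - a^2*y)/(r*y)) = a^2*r/y := by
        field_simp
        ring
      rw [hden]
      field_simp
  have hder : ∀ u ∈ Set.Ioi (0:ℝ), HasDerivWithinAt φ (φ' u) (Set.Ioi 0) u := by
    intro u hu
    have h1 : HasDerivAt (fun u : ℝ => a^2 + r*u^2) (r*(2*u)) u := by
      simpa using ((hasDerivAt_pow 2 u).const_mul r).const_add (a^2)
    have h2 : HasDerivAt φ ((0 * (a^2+r*u^2) - a^2*r*(r*(2*u)))/(a^2+r*u^2)^2) u :=
      (hasDerivAt_const u (a^2*r)).div h1 (hD u).ne'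
    have h3 : (0 * (a^2+r*u^2) - a^2*r*(r*(2*u)))/(a^2+r*u^2)^2 = φ' u := by
      rw [hφ']; ring
    exact (h3 ▸ h2).hasDerivWithinAt
  have hinj : Set.InjOn φ (Set.Ioi 0) := by
    intro u hu v hv h
    simp only [hφ] at h
    have ha2r : (a^2*r) ≠ 0 := by positivity
    have h1 := (div_eq_div_iff (hD u).ne' (hD v).ne').mp h
    have h2 : a^2 + r*v^2 = a^2 + r*u^2 := mul_left_cancel₀ ha2r h1
    have h4 : (u-v)*(u+v) = 0 := by
      have hr' : r ≠ 0 := hr.ne'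
      have : r*(u^2 - v^2) = 0 := by linarith
      have := mul_eq_zero.mp this
      rcases this with h5 | h5
      · exact absurd h5 hr'
      · linear_combination h5
    rcases mul_eq_zero.mp h4 with h5 | h5
    · linarith
    · exfalso
      have hu0 : (0:ℝ) < u := hu
      have hv0 : (0:ℝ) < v := hv
      linarith
  rw [← himg, lintegral_image_deriv measurableSet_Ioi hder hinj]
  have hpt : ∀ u ∈ Set.Ioi (0:ℝ), ENNReal.ofReal |φ' u| * ENNReal.ofReal (Cker a (φ u) r)
      = ENNReal.ofReal ((Real.exp (-a^2/(2*r))/(Real.pi*Real.sqrt r)) * Real.exp (-(1/2)*u^2)) := by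
    intro u hu
    have hu0 : (0:ℝ) < u := hu
    rw [← ENNReal.ofReal_mul (abs_nonneg _)]
    congr 1
    have habs : |φ' u| = 2*a^2*r^2*u/(a^2+r*u^2)^2 := by
      rw [show φ' u = -(2*a^2*r^2*u/(a^2+r*u^2)^2) by rw [hφ']; ring, abs_neg,
        abs_of_nonneg (by positivity)]
    rw [habs]
    simp only [hφ]
    obtain ⟨p, hp0, hpr⟩ : ∃ p, 0 < p ∧ r = p^2 :=
      ⟨Real.sqrt r, Real.sqrt_pos.2 hr, (Real.sq_sqrt hr.le).symm⟩
    rw [hpr, Real.sqrt_sq hp0.le]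
    have hD2 : (0:ℝ) < a^2 + p^2*u^2 := by positivity
    obtain ⟨d, hd0, hdD⟩ : ∃ d, 0 < d ∧ a^2 + p^2*u^2 = d^2 :=
      ⟨Real.sqrt (a^2 + p^2*u^2), Real.sqrt_pos.2 hD2, (Real.sq_sqrt hD2.le).symm⟩
    rw [hdD]
    exact point_eq' ha hp0 hu0 hd0 hdD.symm
  rw [setLIntegral_congr_fun measurableSet_Ioi hpt]
  have hInt : Integrable (fun u : ℝ => (Real.exp (-a^2/(2*r))/(Real.pi*Real.sqrt r))
      * Real.exp (-(1/2)*u^2)) volume := by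
    have := integrable_exp_neg_mul_sq (show (0:ℝ) < 1/2 by norm_num)
    exact this.const_mul _
  rw [← ofReal_integral_eq_lintegral_ofReal hInt.integrableOn
    (Filter.Eventually.of_forall (fun u => by positivity))]
  congr 1
  rw [MeasureTheory.integral_const_mul]
  rw [integral_gaussian_Ioi (1/2)]
  rw [show Real.pi/(1/2:ℝ) = 2*Real.pi by ring]
  rw [Real.sqrt_mul (by positivity : (0:ℝ) ≤ 2*Real.pi) r]
  set q := Real.sqrt (2*Real.pi) with hqdef
  have hq : q^2 = 2*Real.pi := Real.sq_sqrt (by positivity)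
  have hq0 : q ≠ 0 := by rw [hqdef]; positivity
  have hπ := Real.pi_ne_zero
  have hsr : Real.sqrt r ≠ 0 := by positivity
  field_simp
  linear_combination hq

private lemma measurable_Cker (a : ℝ) :
    Measurable (fun p : ℝ × ℝ => Cker a p.1 p.2) := by
  unfold Cker
  fun_prop

/-- The integral identity of Appendix B: for `t > 0` and `x ≠ 0`,
`∫₀ᵗ (√(t−s)/(π s^{3/2})) |x| e^{−x²/(2s)} ds = ∫₀ᵗ (1/√(2π s)) e^{−x²/(2s)} ds`. -/
theorem integral_identity (t x : ℝ) (ht : 0 < t) (hx : x ≠ 0) :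
    ∫ s in Set.Ioc (0:ℝ) t,
        Real.sqrt (t - s) / (Real.pi * s ^ ((3:ℝ)/2)) * |x| * Real.exp (-x ^ 2 / (2 * s))
      = ∫ s in Set.Ioc (0:ℝ) t,
        (1 / Real.sqrt (2 * Real.pi * s)) * Real.exp (-x ^ 2 / (2 * s)) := by
  have ha : 0 < |x| := abs_pos.mpr hx
  set a := |x| with hadef
  have hx2 : x^2 = a^2 := (sq_abs x).symm
  simp only [hx2]
  have hmL : Measurable (fun s : ℝ =>
      Real.sqrt (t - s) / (Real.pi * s ^ ((3:ℝ)/2)) * a * Real.exp (-a ^ 2 / (2 * s))) := by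
    fun_prop
  have hmR : Measurable (fun s : ℝ =>
      (1 / Real.sqrt (2 * Real.pi * s)) * Real.exp (-a ^ 2 / (2 * s))) := by
    fun_prop
  have hLnn : 0 ≤ᵐ[volume.restrict (Set.Ioc (0:ℝ) t)] (fun s : ℝ =>
      Real.sqrt (t - s) / (Real.pi * s ^ ((3:ℝ)/2)) * a * Real.exp (-a ^ 2 / (2 * s))) := by
    filter_upwards [ae_restrict_mem measurableSet_Ioc] with s hs
    have hs0 : (0:ℝ) < s := hs.1
    positivity
  have hRnn : 0 ≤ᵐ[volume.restrict (Set.Ioc (0:ℝ) t)] (fun s : ℝ =>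
      (1 / Real.sqrt (2 * Real.pi * s)) * Real.exp (-a ^ 2 / (2 * s))) := by
    filter_upwards with s
    positivity
  rw [MeasureTheory.integral_eq_lintegral_of_nonneg_ae hLnn hmL.aestronglyMeasurable,
      MeasureTheory.integral_eq_lintegral_of_nonneg_ae hRnn hmR.aestronglyMeasurable]
  congr 1
  have hIoo : volume.restrict (Set.Ioc (0:ℝ) t) = volume.restrict (Set.Ioo (0:ℝ) t) :=
    (Measure.restrict_congr_set Ioo_ae_eq_Ioc).symm
  rw [hIoo]
  set F : ℝ → ℝ → ℝ≥0∞ := fun s r => if s < r then ENNReal.ofReal (Cker a s r) else 0 with hF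
  have hmeasF : Measurable (Function.uncurry F) := by
    apply Measurable.ite (measurableSet_lt measurable_fst measurable_snd)
    · exact (measurable_Cker a).ennreal_ofReal
    · exact measurable_const
  have hrow : ∀ s ∈ Set.Ioo (0:ℝ) t,
      (∫⁻ r in Set.Ioo (0:ℝ) t, F s r)
        = ENNReal.ofReal (Real.sqrt (t - s) / (Real.pi * s ^ ((3:ℝ)/2)) * a
            * Real.exp (-a ^ 2 / (2 * s))) := by
    intro s hs
    have h1 : (fun r => F s r)
        = Set.indicator (Set.Ioi s) (fun r => ENNReal.ofReal (Cker a s r)) := by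
      funext r
      simp [hF, Set.indicator_apply, Set.mem_Ioi]
    rw [h1, lintegral_indicator measurableSet_Ioi,
      Measure.restrict_restrict measurableSet_Ioi]
    have h2 : Set.Ioi s ∩ Set.Ioo (0:ℝ) t = Set.Ioo s t := by
      ext y
      simp only [Set.mem_inter_iff, Set.mem_Ioi, Set.mem_Ioo]
      constructor
      · rintro ⟨h3, _, h5⟩; exact ⟨h3, h5⟩
      · rintro ⟨h3, h4⟩; exact ⟨h3, lt_trans hs.1 h3, h4⟩
    rw [h2]
    exact inner_eq ha hs.1 hs.2
  have hcol : ∀ r ∈ Set.Ioo (0:ℝ) t,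
      (∫⁻ s in Set.Ioo (0:ℝ) t, F s r)
        = ENNReal.ofReal ((1 / Real.sqrt (2 * Real.pi * r)) * Real.exp (-a ^ 2 / (2 * r))) := by
    intro r hr
    have h1 : (fun s => F s r)
        = Set.indicator (Set.Iio r) (fun s => ENNReal.ofReal (Cker a s r)) := by
      funext s
      simp [hF, Set.indicator_apply, Set.mem_Iio]
    rw [h1, lintegral_indicator measurableSet_Iio,
      Measure.restrict_restrict measurableSet_Iio]
    have h2 : Set.Iio r ∩ Set.Ioo (0:ℝ) t = Set.Ioo 0 r := by
      ext y
      simp only [Set.mem_inter_iff, Set.mem_Iio, Set.mem_Ioo]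
      constructor
      · rintro ⟨h3, h4, _⟩; exact ⟨h4, h3⟩
      · rintro ⟨h3, h4⟩; exact ⟨h4, h3, lt_trans h4 hr.2⟩
    rw [h2]
    exact kernel_eq ha hr.1
  calc (∫⁻ s in Set.Ioo (0:ℝ) t, ENNReal.ofReal
          (Real.sqrt (t - s) / (Real.pi * s ^ ((3:ℝ)/2)) * a * Real.exp (-a ^ 2 / (2 * s))))
      = ∫⁻ s in Set.Ioo (0:ℝ) t, ∫⁻ r in Set.Ioo (0:ℝ) t, F s r :=
        (setLIntegral_congr_fun measurableSet_Ioo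
          (fun s hs => (hrow s hs).symm))
    _ = ∫⁻ r in Set.Ioo (0:ℝ) t, ∫⁻ s in Set.Ioo (0:ℝ) t, F s r :=
        MeasureTheory.lintegral_lintegral_swap hmeasF.aemeasurable
    _ = ∫⁻ r in Set.Ioo (0:ℝ) t, ENNReal.ofReal
          ((1 / Real.sqrt (2 * Real.pi * r)) * Real.exp (-a ^ 2 / (2 * r))) :=
        setLIntegral_congr_fun measurableSet_Ioo hcol
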